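/- Generalized Hurwicz approximation guarantee (optimistic regime): under the same setting as before but with α ∈ (0, 1/2], if x̂ minimizes Σ_k v_k f(x,k) and x* minimizes H_α, then H_α(x̂) ≤ ((1−α)/α)·z·H_α(x*). -/

import Mathlib

theorem stmt_16 (K : ℕ) (hK : 1 ≤ K)
    (𝓕 : Finset (Finset (Fin K))) (h𝓕 : ∀ F ∈ 𝓕, 2 ≤ F.card)
    (m : Finset (Fin K) → ℝ) (hm_pos : ∀ F ∈ 𝓕, 0 < m F)
    (hm_sum : ∑ F ∈ 𝓕, m F = 1)
    (z : ℕ) (hz : z = 𝓕.sup Finset.card)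
    (X : Type*) [Nonempty X]
    (f : X → Fin K → ℝ) (hf : ∀ x k, 0 ≤ f x k)
    (v : Fin K → ℝ) (hv : ∀ k, v k = ∑ F ∈ 𝓕.filter (fun F => k ∈ F), m F)
    (α : ℝ) (hα : 0 < α ∧ α ≤ 1 / 2)
    (H : X → ℝ)
    (hH : ∀ x, H x = ∑ F ∈ 𝓕.attach, m F.1 *
      (α * F.1.sup' (Finset.card_pos.mp (by have := h𝓕 F.1 F.2; omega)) (f x) +
       (1 - α) * F.1.inf' (Finset.card_pos.mp (by have := h𝓕 F.1 F.2; omega)) (f x)))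
    (xhat xstar : X)
    (hxhat : ∀ x : X, ∑ k, v k * f xhat k ≤ ∑ k, v k * f x k)
    (hxstar : ∀ x : X, H xstar ≤ H x) :
    H xhat ≤ ((1 - α) / α) * (z : ℝ) * H xstar := by
  obtain ⟨hα0, hα2⟩ := hα
  have h1α : 0 ≤ 1 - α := by linarith
  have hne : ∀ F ∈ 𝓕, F.Nonempty := fun F hF =>
    Finset.card_pos.mp (by have := h𝓕 F hF; omega)
  -- interchange of sums
  have hS : ∀ x : X, ∑ k, v k * f x k = ∑ F ∈ 𝓕.attach, m F.1 * ∑ k ∈ F.1, f x k := by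
    intro x
    rw [Finset.sum_attach 𝓕 (fun F => m F * ∑ k ∈ F, f x k)]
    simp_rw [hv, Finset.sum_mul, Finset.mul_sum]
    calc ∑ k, ∑ F ∈ 𝓕.filter (fun F => k ∈ F), m F * f x k
        = ∑ k, ∑ F ∈ 𝓕, if k ∈ F then m F * f x k else 0 := by
          refine Finset.sum_congr rfl fun k _ => ?_
          rw [Finset.sum_filter]
      _ = ∑ F ∈ 𝓕, ∑ k, if k ∈ F then m F * f x k else 0 := Finset.sum_comm
      _ = ∑ F ∈ 𝓕, ∑ k ∈ F, m F * f x k := by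
          refine Finset.sum_congr rfl fun F _ => ?_
          rw [Finset.sum_ite_mem, Finset.univ_inter]
  -- basic per-set facts
  have hsupnn : ∀ x (F : Finset (Fin K)) (h : F.Nonempty), 0 ≤ F.sup' h (f x) := by
    intro x F h
    obtain ⟨a, ha⟩ := h
    exact le_trans (hf x a) (Finset.le_sup' (f x) ha)
  have hinfnn : ∀ x (F : Finset (Fin K)) (h : F.Nonempty), 0 ≤ F.inf' h (f x) :=
    fun x F h => Finset.le_inf' h _ (fun b _ => hf x b)
  have hsum2 : ∀ x (F : Finset (Fin K)) (hF : F ∈ 𝓕),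
      F.sup' (hne F hF) (f x) + F.inf' (hne F hF) (f x) ≤ ∑ k ∈ F, f x k := by
    intro x F hF
    obtain ⟨a, ha, hsa⟩ := Finset.exists_mem_eq_sup' (hne F hF) (f x)
    have hcard := h𝓕 F hF
    obtain ⟨b, hb, hab⟩ : ∃ b ∈ F, b ≠ a := by
      by_contra h
      push_neg at h
      have hsub : F ⊆ {a} := fun y hy => Finset.mem_singleton.mpr (h y hy)
      have := Finset.card_le_card hsub
      simp at this
      omega
    have hinf : F.inf' (hne F hF) (f x) ≤ f x b := Finset.inf'_le _ hb
    have hsub : ({a, b} : Finset (Fin K)) ⊆ F := by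
      intro y hy
      rcases Finset.mem_insert.mp hy with rfl | hy
      · exact ha
      · exact (Finset.mem_singleton.mp hy ▸ hb)
    have hpair : ∑ k ∈ ({a, b} : Finset (Fin K)), f x k ≤ ∑ k ∈ F, f x k :=
      Finset.sum_le_sum_of_subset_of_nonneg hsub (fun k _ _ => hf x k)
    rw [Finset.sum_pair hab.symm] at hpair
    have : F.sup' (hne F hF) (f x) = f x a := hsa
    linarith
  -- step 1 : H xhat ≤ (1-α) * S xhat
  have key1 : H xhat ≤ (1 - α) * ∑ k, v k * f xhat k := by
    rw [hH, hS, Finset.mul_sum]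
    refine Finset.sum_le_sum fun F _ => ?_
    have hF := F.2
    have hmn := (hm_pos F.1 hF).le
    have hs := hsupnn xhat F.1 (hne F.1 hF)
    have hi := hinfnn xhat F.1 (hne F.1 hF)
    have h2 := hsum2 xhat F.1 hF
    have hstep : α * F.1.sup' (hne F.1 hF) (f xhat) + (1 - α) * F.1.inf' (hne F.1 hF) (f xhat)
        ≤ (1 - α) * ∑ k ∈ F.1, f xhat k := by nlinarith
    calc m F.1 * (α * F.1.sup' (hne F.1 hF) (f xhat)
            + (1 - α) * F.1.inf' (hne F.1 hF) (f xhat))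
        ≤ m F.1 * ((1 - α) * ∑ k ∈ F.1, f xhat k) := mul_le_mul_of_nonneg_left hstep hmn
      _ = (1 - α) * (m F.1 * ∑ k ∈ F.1, f xhat k) := by ring
  -- step 3 : S xstar ≤ z * T xstar
  have key3 : ∑ k, v k * f xstar k
      ≤ (z : ℝ) * ∑ F ∈ 𝓕.attach, m F.1 * F.1.sup' (hne F.1 F.2) (f xstar) := by
    rw [hS, Finset.mul_sum]
    refine Finset.sum_le_sum fun F _ => ?_
    have hF := F.2
    have hmn := (hm_pos F.1 hF).le
    have hs := hsupnn xstar F.1 (hne F.1 hF)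
    have hcardz : (F.1.card : ℝ) ≤ (z : ℝ) := by
      exact_mod_cast hz ▸ Finset.le_sup hF
    have hsum : ∑ k ∈ F.1, f xstar k ≤ (F.1.card : ℝ) * F.1.sup' (hne F.1 hF) (f xstar) := by
      have := Finset.sum_le_card_nsmul F.1 (f xstar) (F.1.sup' (hne F.1 hF) (f xstar))
        (fun k hk => Finset.le_sup' (f xstar) hk)
      simpa [nsmul_eq_mul] using this
    have : ∑ k ∈ F.1, f xstar k ≤ (z : ℝ) * F.1.sup' (hne F.1 hF) (f xstar) :=
      le_trans hsum (mul_le_mul_of_nonneg_right hcardz hs)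
    calc m F.1 * ∑ k ∈ F.1, f xstar k
        ≤ m F.1 * ((z : ℝ) * F.1.sup' (hne F.1 hF) (f xstar)) :=
          mul_le_mul_of_nonneg_left this hmn
      _ = (z : ℝ) * (m F.1 * F.1.sup' (hne F.1 hF) (f xstar)) := by ring
  -- step 4 : α * T xstar ≤ H xstar
  have key4 : α * ∑ F ∈ 𝓕.attach, m F.1 * F.1.sup' (hne F.1 F.2) (f xstar) ≤ H xstar := by
    rw [hH, Finset.mul_sum]
    refine Finset.sum_le_sum fun F _ => ?_
    have hF := F.2
    have hmn := (hm_pos F.1 hF).le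
    have hi := hinfnn xstar F.1 (hne F.1 hF)
    nlinarith [mul_nonneg hmn hi, mul_nonneg h1α (mul_nonneg hmn hi)]
  -- assemble
  have hznn : (0 : ℝ) ≤ (z : ℝ) := Nat.cast_nonneg z
  have c4 : ∑ F ∈ 𝓕.attach, m F.1 * F.1.sup' (hne F.1 F.2) (f xstar) ≤ H xstar / α := by
    rw [le_div_iff₀ hα0]
    linarith
  calc H xhat ≤ (1 - α) * ∑ k, v k * f xhat k := key1
    _ ≤ (1 - α) * ∑ k, v k * f xstar k :=
        mul_le_mul_of_nonneg_left (hxhat xstar) h1α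
    _ ≤ (1 - α) * ((z : ℝ) * ∑ F ∈ 𝓕.attach, m F.1 * F.1.sup' (hne F.1 F.2) (f xstar)) :=
        mul_le_mul_of_nonneg_left key3 h1α
    _ ≤ (1 - α) * ((z : ℝ) * (H xstar / α)) := by
        refine mul_le_mul_of_nonneg_left (mul_le_mul_of_nonneg_left c4 hznn) h1α
    _ = ((1 - α) / α) * (z : ℝ) * H xstar := by field_simp
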